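/- Let δ ∈ [0, 1/4], ε > 0, and let E be a finite-dimensional real normed space. Let A, B : [1,∞) → (continuous linear endomorphisms of E) and f : [1,∞) → E be continuous with ‖A(λ)‖ ≤ δ λ⁻², ‖B(λ)‖ ≤ δ λ⁻³, and ‖f(λ)‖ ≤ δ λ⁻³ for all λ ≥ 1 (operator norms), and let y : [1,∞) → E be twice differentiable with y(1) = 0, y'(1) = 0, and y''(λ) = A(λ) y'(λ) + B(λ) y(λ) + f(λ) for all λ ≥ 1. Then ‖y'(λ)‖ ≤ δ and ‖y(λ)‖ ≤ δ·(λ − 1) for all λ ≥ 1, and y'(λ) converges to a limit in E as λ → ∞. -/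

import Mathlib

open Filter

set_option maxHeartbeats 1000000 in
/-- Grönwall estimate for the second-order linear Jacobi system (5.24) in
Proposition 5.3. -/
theorem penrose_jacobi_gronwall (δ ε : ℝ) (hδ0 : 0 ≤ δ) (hδ : δ ≤ 1/4) (hε : 0 < ε)
    (E : Type*) [NormedAddCommGroup E] [NormedSpace ℝ E] [FiniteDimensional ℝ E]
    (A B : ℝ → E →L[ℝ] E) (f : ℝ → E)
    (hA_cont : ContinuousOn A (Set.Ici 1)) (hB_cont : ContinuousOn B (Set.Ici 1))
    (hf_cont : ContinuousOn f (Set.Ici 1))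
    (hA : ∀ l ≥ (1:ℝ), ‖A l‖ ≤ δ * (l ^ 2)⁻¹)
    (hB : ∀ l ≥ (1:ℝ), ‖B l‖ ≤ δ * (l ^ 3)⁻¹)
    (hf : ∀ l ≥ (1:ℝ), ‖f l‖ ≤ δ * (l ^ 3)⁻¹)
    (y y' : ℝ → E) (hy0 : y 1 = 0) (hy'0 : y' 1 = 0)
    (hy : ∀ l ≥ (1:ℝ), HasDerivAt y (y' l) l)
    (hy' : ∀ l ≥ (1:ℝ), HasDerivAt y' (A l (y' l) + B l (y l) + f l) l) :
    (∀ l ≥ (1:ℝ), ‖y' l‖ ≤ δ ∧ ‖y l‖ ≤ δ * (l - 1)) ∧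
    ∃ L : E, Tendsto y' atTop (nhds L) := by
  set F : ℝ → E := fun l => A l (y' l) + B l (y l) + f l with hFdef
  have hy'cont : ContinuousOn y' (Set.Ici 1) := fun x hx =>
    ((hy' x hx).continuousAt).continuousWithinAt
  have hycont : ContinuousOn y (Set.Ici 1) := fun x hx =>
    ((hy x hx).continuousAt).continuousWithinAt
  have hFcont : ContinuousOn F (Set.Ici 1) :=
    ((hA_cont.clm_apply hy'cont).add (hB_cont.clm_apply hycont)).add hf_cont
  -- FTC representations
  have hy'int : ∀ l ≥ (1:ℝ), y' l = ∫ s in (1:ℝ)..l, F s := by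
    intro l hl
    have h1 : ∀ x ∈ Set.uIcc (1:ℝ) l, HasDerivAt y' (F x) x := by
      intro x hx
      rw [Set.uIcc_of_le hl] at hx
      exact hy' x hx.1
    have h2 : IntervalIntegrable F MeasureTheory.volume 1 l :=
      (hFcont.mono (by rw [Set.uIcc_of_le hl]; exact Set.Icc_subset_Ici_self)).intervalIntegrable
    have h3 := intervalIntegral.integral_eq_sub_of_hasDerivAt h1 h2
    rw [h3, hy'0, sub_zero]
  have hyint : ∀ l ≥ (1:ℝ), y l = ∫ s in (1:ℝ)..l, y' s := by
    intro l hl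
    have h1 : ∀ x ∈ Set.uIcc (1:ℝ) l, HasDerivAt y (y' x) x := by
      intro x hx
      rw [Set.uIcc_of_le hl] at hx
      exact hy x hx.1
    have h2 : IntervalIntegrable y' MeasureTheory.volume 1 l :=
      (hy'cont.mono (by rw [Set.uIcc_of_le hl]; exact Set.Icc_subset_Ici_self)).intervalIntegrable
    have h3 := intervalIntegral.integral_eq_sub_of_hasDerivAt h1 h2
    rw [h3, hy0, sub_zero]
  -- Key bound: ‖y' l‖ ≤ δ for all l ≥ 1.
  have key : ∀ l ≥ (1:ℝ), ‖y' l‖ ≤ δ := by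
    intro Λ hΛ
    obtain ⟨c, hc, hcmax'⟩ := (isCompact_Icc : IsCompact (Set.Icc 1 Λ)).exists_isMaxOn
      (Set.nonempty_Icc.2 hΛ) ((hy'cont.mono Set.Icc_subset_Ici_self).norm)
    have hcmax : ∀ x ∈ Set.Icc (1:ℝ) Λ, ‖y' x‖ ≤ ‖y' c‖ := fun x hx => hcmax' hx
    set M := ‖y' c‖ with hMdef
    have hM0 : 0 ≤ M := norm_nonneg _
    have hc1 : (1:ℝ) ≤ c := hc.1
    -- ‖y s‖ ≤ M * (s - 1) for s ∈ Icc 1 Λ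
    have hybound : ∀ s ∈ Set.Icc (1:ℝ) Λ, ‖y s‖ ≤ M * (s - 1) := by
      intro s hs
      rw [hyint s hs.1]
      have hb : ∀ x ∈ Set.uIoc (1:ℝ) s, ‖y' x‖ ≤ M := by
        intro x hx
        rw [Set.uIoc_of_le hs.1] at hx
        exact hcmax x ⟨le_of_lt hx.1, le_trans hx.2 hs.2⟩
      calc ‖∫ t in (1:ℝ)..s, y' t‖ ≤ M * |s - 1| :=
            intervalIntegral.norm_integral_le_of_norm_le_const hb
        _ = M * (s - 1) := by rw [abs_of_nonneg (by linarith [hs.1])]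
    -- pointwise bound on F
    have hFbound : ∀ s ∈ Set.Icc (1:ℝ) Λ, ‖F s‖ ≤ 2 * δ * M * (s ^ 2)⁻¹ + δ * (s ^ 3)⁻¹ := by
      intro s hs
      have hs1 : (1:ℝ) ≤ s := hs.1
      have hs0 : (0:ℝ) < s := by linarith
      have h1 : ‖A s (y' s)‖ ≤ δ * (s ^ 2)⁻¹ * M := by
        calc ‖A s (y' s)‖ ≤ ‖A s‖ * ‖y' s‖ := (A s).le_opNorm _
          _ ≤ δ * (s ^ 2)⁻¹ * M := by
              have := hA s hs1
              have := hcmax s hs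
              have h2 : (0:ℝ) ≤ (s ^ 2)⁻¹ := by positivity
              nlinarith [norm_nonneg (A s), norm_nonneg (y' s)]
      have h2 : ‖B s (y s)‖ ≤ δ * (s ^ 3)⁻¹ * (M * (s - 1)) := by
        calc ‖B s (y s)‖ ≤ ‖B s‖ * ‖y s‖ := (B s).le_opNorm _
          _ ≤ δ * (s ^ 3)⁻¹ * (M * (s - 1)) := by
              have := hB s hs1
              have := hybound s hs
              have h2 : (0:ℝ) ≤ (s ^ 3)⁻¹ := by positivity
              nlinarith [norm_nonneg (B s), norm_nonneg (y s)]
      have h3 : δ * (s ^ 3)⁻¹ * (M * (s - 1)) ≤ δ * M * (s ^ 2)⁻¹ := by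
        have h4 : (s - 1) * s⁻¹ ≤ 1 := by
          rw [← div_eq_mul_inv, div_le_one hs0]; linarith
        calc δ * (s ^ 3)⁻¹ * (M * (s - 1)) = δ * M * (s ^ 2)⁻¹ * ((s - 1) * s⁻¹) := by
              rw [show (s ^ 3)⁻¹ = (s ^ 2)⁻¹ * s⁻¹ by rw [← mul_inv]; ring_nf]; ring
          _ ≤ δ * M * (s ^ 2)⁻¹ * 1 := by
              exact mul_le_mul_of_nonneg_left h4 (by positivity)
          _ = δ * M * (s ^ 2)⁻¹ := mul_one _
      calc ‖F s‖ ≤ ‖A s (y' s)‖ + ‖B s (y s)‖ + ‖f s‖ :=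
            (norm_add_le _ _).trans (by gcongr; exact norm_add_le _ _)
        _ ≤ δ * (s ^ 2)⁻¹ * M + δ * M * (s ^ 2)⁻¹ + δ * (s ^ 3)⁻¹ := by
            have := hf s hs1
            linarith [h2.trans h3]
        _ = 2 * δ * M * (s ^ 2)⁻¹ + δ * (s ^ 3)⁻¹ := by ring
    -- antiderivative of the bound
    set G : ℝ → ℝ := fun s => -(2 * δ * M) * s⁻¹ - (δ / 2) * (s ^ 2)⁻¹ with hGdef
    have hGderiv : ∀ s ∈ Set.uIcc (1:ℝ) c,
        HasDerivAt G (2 * δ * M * (s ^ 2)⁻¹ + δ * (s ^ 3)⁻¹) s := by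
      intro s hs
      rw [Set.uIcc_of_le hc1] at hs
      have hs0 : s ≠ 0 := by have := hs.1; positivity
      have d1 : HasDerivAt (fun x : ℝ => x⁻¹) (-(s ^ 2)⁻¹) s := hasDerivAt_inv hs0
      have d2 : HasDerivAt (fun x : ℝ => (x ^ 2)⁻¹) (-(2 * s) / (s ^ 2) ^ 2) s := by
        have := ((hasDerivAt_pow 2 s).inv (pow_ne_zero 2 hs0))
        refine this.congr_deriv ?_
        norm_num
      have := ((d1.const_mul (-(2 * δ * M))).sub (d2.const_mul (δ / 2)))
      refine this.congr_deriv ?_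
      field_simp
      ring
    have hbd_int : IntervalIntegrable (fun s => 2 * δ * M * (s ^ 2)⁻¹ + δ * (s ^ 3)⁻¹)
        MeasureTheory.volume 1 c := by
      apply ContinuousOn.intervalIntegrable
      apply ContinuousOn.add
      · exact (continuousOn_const.mul ((continuousOn_pow 2).inv₀ (fun x hx => by
          rw [Set.uIcc_of_le hc1] at hx
          have : (1:ℝ) ≤ x := hx.1
          positivity)))
      · exact (continuousOn_const.mul ((continuousOn_pow 3).inv₀ (fun x hx => by
          rw [Set.uIcc_of_le hc1] at hx
          have : (1:ℝ) ≤ x := hx.1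
          positivity)))
    have hint_val : ∫ s in (1:ℝ)..c, (2 * δ * M * (s ^ 2)⁻¹ + δ * (s ^ 3)⁻¹) = G c - G 1 :=
      intervalIntegral.integral_eq_sub_of_hasDerivAt hGderiv hbd_int
    have hGle : G c - G 1 ≤ 2 * δ * M + δ / 2 := by
      have hc0 : (0:ℝ) < c := by linarith
      have h1 : (0:ℝ) < c⁻¹ := by positivity
      have h2 : (0:ℝ) < (c ^ 2)⁻¹ := by positivity
      have hδM : (0:ℝ) ≤ 2 * δ * M := by positivity
      simp only [hGdef]
      have e1 : -(2 * δ * M) * c⁻¹ ≤ 0 := by nlinarith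
      have e2 : -(δ / 2) * (c ^ 2)⁻¹ ≤ 0 := by nlinarith
      simp only [one_pow, inv_one, mul_one]
      nlinarith
    -- bound M
    have hMbound : M ≤ 2 * δ * M + δ / 2 := by
      have hrep := hy'int c hc1
      have hnorm : ‖y' c‖ ≤ |∫ s in (1:ℝ)..c, (2 * δ * M * (s ^ 2)⁻¹ + δ * (s ^ 3)⁻¹)| := by
        rw [hrep]
        apply intervalIntegral.norm_integral_le_abs_of_norm_le _ hbd_int
        rw [MeasureTheory.ae_restrict_iff' measurableSet_uIoc]
        filter_upwards with x hx
        rw [Set.uIoc_of_le hc1] at hx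
        exact hFbound x ⟨le_of_lt hx.1, le_trans hx.2 hc.2⟩
      have hGnonneg : 0 ≤ G c - G 1 := by
        have hc0 : (0:ℝ) < c := by linarith
        have h1 : c⁻¹ ≤ 1 := by
          rw [inv_le_one_iff₀]; right; exact hc1
        have h2 : (c ^ 2)⁻¹ ≤ 1 := by
          rw [inv_le_one_iff₀]; right; nlinarith
        have hδM : (0:ℝ) ≤ 2 * δ * M := by positivity
        have h1' : (0:ℝ) < c⁻¹ := by positivity
        have h2' : (0:ℝ) < (c ^ 2)⁻¹ := by positivity
        simp only [hGdef, one_pow, inv_one, mul_one]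
        nlinarith
      have habs : |∫ s in (1:ℝ)..c, (2 * δ * M * (s ^ 2)⁻¹ + δ * (s ^ 3)⁻¹)| ≤
          2 * δ * M + δ / 2 := by
        rw [hint_val, abs_of_nonneg hGnonneg]
        exact hGle
      exact hnorm.trans habs
    have hMδ : M ≤ δ := by nlinarith
    exact le_trans (hcmax Λ ⟨hΛ, le_refl Λ⟩) hMδ
  -- bound on y
  have keyy : ∀ l ≥ (1:ℝ), ‖y l‖ ≤ δ * (l - 1) := by
    intro l hl
    rw [hyint l hl]
    have hb : ∀ x ∈ Set.uIoc (1:ℝ) l, ‖y' x‖ ≤ δ := by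
      intro x hx
      rw [Set.uIoc_of_le hl] at hx
      exact key x (le_of_lt hx.1)
    calc ‖∫ t in (1:ℝ)..l, y' t‖ ≤ δ * |l - 1| :=
          intervalIntegral.norm_integral_le_of_norm_le_const hb
      _ = δ * (l - 1) := by rw [abs_of_nonneg (by linarith)]
  refine ⟨fun l hl => ⟨key l hl, keyy l hl⟩, ?_⟩
  -- convergence of y'
  have hFint : MeasureTheory.IntegrableOn F (Set.Ioi 1) MeasureTheory.volume := by
    have hmeas : MeasureTheory.AEStronglyMeasurable F
        (MeasureTheory.volume.restrict (Set.Ioi (1:ℝ))) :=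
      (hFcont.mono Set.Ioi_subset_Ici_self).aestronglyMeasurable measurableSet_Ioi
    have hgint : MeasureTheory.IntegrableOn (fun s : ℝ => (2 * δ ^ 2 + δ) * s ^ (-2 : ℝ))
        (Set.Ioi 1) MeasureTheory.volume :=
      (integrableOn_Ioi_rpow_of_lt (by norm_num) one_pos).const_mul _
    apply MeasureTheory.Integrable.mono' hgint hmeas
    rw [MeasureTheory.ae_restrict_iff' measurableSet_Ioi]
    filter_upwards with s hs
    have hs1 : (1:ℝ) ≤ s := le_of_lt hs
    have hs0 : (0:ℝ) < s := by linarith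
    have hFb : ‖F s‖ ≤ ‖A s‖ * ‖y' s‖ + ‖B s‖ * ‖y s‖ + ‖f s‖ := by
      calc ‖F s‖ ≤ ‖A s (y' s)‖ + ‖B s (y s)‖ + ‖f s‖ :=
            (norm_add_le _ _).trans (by gcongr; exact norm_add_le _ _)
        _ ≤ _ := by gcongr <;> [exact (A s).le_opNorm _; exact (B s).le_opNorm _]
    have h3 : (s ^ 3)⁻¹ ≤ (s ^ 2)⁻¹ := by
      apply inv_anti₀ (by positivity)
      nlinarith
    have hrw : s ^ (-2 : ℝ) = (s ^ 2)⁻¹ := by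
      rw [Real.rpow_neg (le_of_lt hs0), Real.rpow_two]
    rw [hrw]
    have hA' := hA s hs1
    have hB' := hB s hs1
    have hf' := hf s hs1
    have hy's := key s hs1
    have hys := keyy s hs1
    have hBy : ‖B s‖ * ‖y s‖ ≤ δ * (s ^ 3)⁻¹ * (δ * (s - 1)) := by
      have : (0:ℝ) ≤ (s ^ 3)⁻¹ := by positivity
      nlinarith [norm_nonneg (B s), norm_nonneg (y s)]
    have hBy2 : δ * (s ^ 3)⁻¹ * (δ * (s - 1)) ≤ δ ^ 2 * (s ^ 2)⁻¹ := by
      have h4 : (s - 1) * s⁻¹ ≤ 1 := by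
        rw [← div_eq_mul_inv, div_le_one hs0]; linarith
      calc δ * (s ^ 3)⁻¹ * (δ * (s - 1)) = δ ^ 2 * (s ^ 2)⁻¹ * ((s - 1) * s⁻¹) := by
            rw [show (s ^ 3)⁻¹ = (s ^ 2)⁻¹ * s⁻¹ by rw [← mul_inv]; ring_nf]; ring
        _ ≤ δ ^ 2 * (s ^ 2)⁻¹ * 1 := mul_le_mul_of_nonneg_left h4 (by positivity)
        _ = δ ^ 2 * (s ^ 2)⁻¹ := mul_one _
    have hAy : ‖A s‖ * ‖y' s‖ ≤ δ * (s ^ 2)⁻¹ * δ := by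
      have : (0:ℝ) ≤ (s ^ 2)⁻¹ := by positivity
      nlinarith [norm_nonneg (A s), norm_nonneg (y' s)]
    have hfb : ‖f s‖ ≤ δ * (s ^ 2)⁻¹ := le_trans hf' (by
      have : (0:ℝ) ≤ δ := hδ0
      nlinarith)
    nlinarith [hBy.trans hBy2]
  have htend := MeasureTheory.intervalIntegral_tendsto_integral_Ioi (1:ℝ) hFint tendsto_id
  refine ⟨∫ s in Set.Ioi (1:ℝ), F s, ?_⟩
  apply htend.congr'
  filter_upwards [eventually_ge_atTop (1:ℝ)] with l hl
  exact (hy'int l hl).symm
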